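/- Even the space D_1^L of persistence diagrams with at most one point contained in [−L,L]², equipped with the bottleneck distance d_∞, admits no bi-Lipschitz embedding into ℝⁿ for any n ∈ ℕ. -/

import Mathlib

open scoped ENNReal

noncomputable section

/-- The `ℓ∞` distance of a point of the plane to the diagonal `Δ = {(x,x)}`. -/
def distDelta (q : ℝ × ℝ) : ℝ := (q.2 - q.1) / 2

/-- A partial matching between two finite multisets of points of the plane:
a multiset of pairs whose first (resp. second) coordinates form a sub-multiset
of `D₁` (resp. `D₂`); unmatched points will be matched to the diagonal. -/
def IsMatching (P : Multiset ((ℝ × ℝ) × (ℝ × ℝ))) (D₁ D₂ : Multiset (ℝ × ℝ)) : Prop :=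
  P.map Prod.fst ≤ D₁ ∧ P.map Prod.snd ≤ D₂

/-- The `p`-cost of a partial matching (for finite `p`): `p`-th root of the sum of the
`p`-th powers of the `ℓ∞` distances between matched points and of the `ℓ∞` distances
to the diagonal of unmatched points.  (Note: `dist` on `ℝ × ℝ` is the `ℓ∞` distance.) -/
def costP (p : ℕ) (P : Multiset ((ℝ × ℝ) × (ℝ × ℝ))) (D₁ D₂ : Multiset (ℝ × ℝ)) : ℝ :=
  (((P.map fun ab => dist ab.1 ab.2 ^ p).sum
      + ((D₁ - P.map Prod.fst).map fun q => distDelta q ^ p).sum)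
      + ((D₂ - P.map Prod.snd).map fun q => distDelta q ^ p).sum) ^ ((p : ℝ)⁻¹)

/-- The `∞`-cost (bottleneck cost) of a partial matching: the maximum of the `ℓ∞`
distances between matched points and of the `ℓ∞` distances to the diagonal of
unmatched points. -/
def costInf (P : Multiset ((ℝ × ℝ) × (ℝ × ℝ))) (D₁ D₂ : Multiset (ℝ × ℝ)) : ℝ :=
  max ((P.map fun ab => dist ab.1 ab.2).fold max 0)
    (max (((D₁ - P.map Prod.fst).map distDelta).fold max 0)
      (((D₂ - P.map Prod.snd).map distDelta).fold max 0))

/-- The `p`-diagram distance, `p ∈ ℕ ∪ {∞}`: the infimum of the costs of partial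
matchings between the two diagrams. -/
def diagramDist (p : ℕ∞) (D₁ D₂ : Multiset (ℝ × ℝ)) : ℝ :=
  sInf {c : ℝ | ∃ P, IsMatching P D₁ D₂ ∧
    c = WithTop.recTopCoe (costInf P D₁ D₂) (fun q => costP q P D₁ D₂) p}

/-- The space of persistence diagrams with at most `N` points, all contained in
`[-L,L]²` (and lying strictly above the diagonal). -/
def DiagNL (N : ℕ) (L : ℝ) : Type :=
  {D : Multiset (ℝ × ℝ) // D.card ≤ N ∧
    ∀ q ∈ D, q.1 < q.2 ∧ -L ≤ q.1 ∧ q.1 ≤ L ∧ -L ≤ q.2 ∧ q.2 ≤ L}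

/-! ### Auxiliary lemmas -/

lemma fold_max_nonneg (s : Multiset ℝ) : 0 ≤ s.fold max 0 := by
  induction s using Multiset.induction_on with
  | empty => simp
  | cons a s ih => rw [Multiset.fold_cons_left]; exact le_max_of_le_right ih

lemma costInf_empty (p q : ℝ × ℝ) {δ : ℝ} (hδ : 0 < δ)
    (hp : distDelta p = δ) (hq : distDelta q = δ) :
    costInf 0 {p} {q} = δ := by
  simp [costInf, hp, hq, Multiset.fold_singleton]
  exact hδ.le

lemma matching_cases {P : Multiset ((ℝ × ℝ) × (ℝ × ℝ))} {p q : ℝ × ℝ}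
    (h : IsMatching P {p} {q}) : P = 0 ∨ P = {(p, q)} := by
  have hc : P.card ≤ 1 := by
    have := Multiset.card_le_card h.1
    simpa using this
  interval_cases hP : P.card
  · left; exact Multiset.card_eq_zero.mp hP
  · right
    obtain ⟨a, rfl⟩ := Multiset.card_eq_one.mp hP
    have h1 : a.1 = p := by
      have := h.1; simp [Multiset.singleton_le] at this; simpa using this
    have h2 : a.2 = q := by
      have := h.2; simp [Multiset.singleton_le] at this; simpa using this
    have : a = (p, q) := Prod.ext h1 h2
    rw [this]

lemma diagramDist_singleton_eq {p q : ℝ × ℝ} {δ : ℝ} (hδ : 0 < δ)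
    (hp : distDelta p = δ) (hq : distDelta q = δ) (hpq : δ ≤ dist p q) :
    diagramDist ⊤ {p} {q} = δ := by
  have hmem : δ ∈ {c : ℝ | ∃ P, IsMatching P ({p} : Multiset (ℝ × ℝ)) {q} ∧
      c = WithTop.recTopCoe (costInf P {p} {q}) (fun q' => costP q' P {p} {q}) (⊤ : ℕ∞)} :=
    ⟨0, ⟨by simp [IsMatching], by simp [IsMatching]⟩, (costInf_empty p q hδ hp hq).symm⟩
  refine le_antisymm (csInf_le ?_ hmem) (le_csInf ⟨δ, hmem⟩ ?_)
  · refine ⟨0, ?_⟩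
    rintro c ⟨P, hP, rfl⟩
    show (0:ℝ) ≤ costInf P {p} {q}
    exact le_max_of_le_left (fold_max_nonneg _)
  · rintro c ⟨P, hP, rfl⟩
    show δ ≤ costInf P {p} {q}
    rcases matching_cases hP with rfl | rfl
    · rw [costInf_empty p q hδ hp hq]
    · refine le_trans hpq (le_trans ?_ (le_max_left _ _))
      simp [Multiset.fold_singleton, le_max_iff]

lemma one_le_abs_natCast_sub {a b : ℕ} (h : a ≠ b) : (1:ℝ) ≤ |(a:ℝ) - (b:ℝ)| := by
  have h0 : ((a:ℤ) - b) ≠ 0 := by omega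
  have h1 : (1:ℤ) ≤ |(a:ℤ) - b| := Int.one_le_abs h0
  calc (1:ℝ) = ((1:ℤ):ℝ) := by norm_num
    _ ≤ ((|(a:ℤ) - b| : ℤ) : ℝ) := by exact_mod_cast h1
    _ = |(a:ℝ) - b| := by push_cast; ring_nf

/-- Even the space `D_1^L` of persistence diagrams with at most one point contained in
`[-L,L]²`, equipped with the bottleneck distance `d_∞`, admits no bi-Lipschitz
embedding into `ℝⁿ`, for any `n`. -/
theorem no_biLipschitz_Diag1L_into_Rn (n : ℕ) (L : ℝ) (hL : 0 < L) :
    ¬ ∃ (Φ : DiagNL 1 L → EuclideanSpace ℝ (Fin n)) (A B : ℝ), 0 < A ∧ 0 < B ∧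
      ∀ D D' : DiagNL 1 L,
        A * diagramDist ⊤ D.1 D'.1 ≤ dist (Φ D) (Φ D') ∧
        dist (Φ D) (Φ D') ≤ B * diagramDist ⊤ D.1 D'.1 := by
  rintro ⟨Φ, A, B, hA, hB, hΦ⟩
  set R : ℝ := B / A with hRdef
  have hR0 : 0 ≤ R := div_nonneg hB.le hA.le
  -- a finite 1/2-cover of the ball of radius R
  obtain ⟨t, htfin, hcov⟩ : ∃ t : Set (EuclideanSpace ℝ (Fin n)),
      t.Finite ∧ Metric.closedBall 0 R ⊆ ⋃ y ∈ t, Metric.ball y (1/2) := by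
    have := (isCompact_closedBall (0 : EuclideanSpace ℝ (Fin n)) R).totallyBounded
    rw [Metric.totallyBounded_iff] at this
    exact this (1/2) (by norm_num)
  haveI : Fintype t := htfin.fintype
  set k : ℕ := Fintype.card t + 2 with hk
  have hk0 : 0 < (k:ℝ) := by positivity
  set δ : ℝ := L / (4 * k) with hδdef
  have hδ : 0 < δ := by
    apply div_pos hL; positivity
  have hδk : 4 * δ * (k:ℝ) = L := by
    field_simp [hδdef]
    rw [hδdef]; field_simp
  -- the points and diagrams
  set x : Fin k → ℝ := fun i => -L + 4 * δ * i with hx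
  set p : Fin k → ℝ × ℝ := fun i => (x i, x i + 2 * δ) with hp
  have hple : ∀ i : Fin k, -L ≤ x i ∧ x i + 2 * δ ≤ L := by
    intro i
    have hi0 : (0:ℝ) ≤ (i:ℝ) := Nat.cast_nonneg _
    have hi1 : (i:ℝ) ≤ (k:ℝ) - 1 := by
      have : (i:ℕ) < k := i.2
      have : ((i:ℕ):ℝ) ≤ (k:ℝ) - 1 := by
        have := Nat.le_sub_one_of_lt this
        calc ((i:ℕ):ℝ) ≤ ((k-1:ℕ):ℝ) := by exact_mod_cast this
          _ ≤ (k:ℝ) - 1 := by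
            have hk2 : 1 ≤ k := by omega
            push_cast [Nat.cast_sub hk2]
            ring_nf
            exact le_rfl
      simpa using this
    constructor
    · simp only [hx]
      nlinarith
    · simp only [hx]
      nlinarith [mul_le_mul_of_nonneg_left hi1 (by positivity : (0:ℝ) ≤ 4*δ)]
  have hD : ∀ i : Fin k, Multiset.card ({p i} : Multiset (ℝ × ℝ)) ≤ 1 ∧
      ∀ q ∈ ({p i} : Multiset (ℝ × ℝ)),
        q.1 < q.2 ∧ -L ≤ q.1 ∧ q.1 ≤ L ∧ -L ≤ q.2 ∧ q.2 ≤ L := by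
    intro i
    refine ⟨by simp, ?_⟩
    intro q hq
    rw [Multiset.mem_singleton] at hq
    subst hq
    obtain ⟨h1, h2⟩ := hple i
    simp only [hp]
    refine ⟨by linarith, by linarith, by linarith, by linarith, by linarith⟩
  set D : Fin k → DiagNL 1 L := fun i => ⟨{p i}, hD i⟩ with hDdef
  -- distance computation
  have hdd : ∀ i : Fin k, distDelta (p i) = δ := by
    intro i; simp only [distDelta, hp]; ring
  have hdist : ∀ i j : Fin k, i ≠ j → diagramDist ⊤ (D i).1 (D j).1 = δ := by
    intro i j hij
    have hlow : δ ≤ dist (p i) (p j) := by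
      have h1 : (1:ℝ) ≤ |((i:ℕ):ℝ) - ((j:ℕ):ℝ)| :=
        one_le_abs_natCast_sub (fun h => hij (Fin.ext h))
      have h2 : dist (x i) (x j) = 4 * δ * |((i:ℕ):ℝ) - ((j:ℕ):ℝ)| := by
        rw [Real.dist_eq]
        have : x i - x j = 4 * δ * (((i:ℕ):ℝ) - ((j:ℕ):ℝ)) := by
          simp only [hx]; ring
        rw [this, abs_mul, abs_of_pos (by positivity : (0:ℝ) < 4*δ)]
      have h3 : dist (x i) (x j) ≤ dist (p i) (p j) := by
        rw [Prod.dist_eq]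
        exact le_max_left _ _
      nlinarith
    exact diagramDist_singleton_eq hδ (hdd i) (hdd j) hlow
  -- the scaled image points
  set f : Fin k → EuclideanSpace ℝ (Fin n) := fun i => (A*δ)⁻¹ • (Φ (D i) - Φ (D 0)) with hf
  have hAδ : 0 < A * δ := by positivity
  have hfd : ∀ i j : Fin k, dist (f i) (f j) = (A*δ)⁻¹ * dist (Φ (D i)) (Φ (D j)) := by
    intro i j
    simp only [hf]
    rw [dist_smul₀, dist_sub_right, Real.norm_eq_abs, abs_of_pos (by positivity)]
  have hlow1 : ∀ i j : Fin k, i ≠ j → 1 ≤ dist (f i) (f j) := by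
    intro i j hij
    rw [hfd]
    have h1 := (hΦ (D i) (D j)).1
    rw [hdist i j hij] at h1
    calc (1:ℝ) = (A*δ)⁻¹ * (A*δ) := by field_simp
      _ ≤ (A*δ)⁻¹ * dist (Φ (D i)) (Φ (D j)) := by
          apply mul_le_mul_of_nonneg_left _ (by positivity)
          linarith
  have hmemB : ∀ i : Fin k, f i ∈ Metric.closedBall (0:EuclideanSpace ℝ (Fin n)) R := by
    intro i
    rw [Metric.mem_closedBall]
    by_cases h0 : i = 0
    · subst h0
      simp [hf, hR0]
    · have h2 := (hΦ (D i) (D 0)).2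
      rw [hdist i 0 h0] at h2
      have : dist (f i) (f 0) ≤ R := by
        rw [hfd]
        calc (A*δ)⁻¹ * dist (Φ (D i)) (Φ (D 0)) ≤ (A*δ)⁻¹ * (B*δ) := by
              apply mul_le_mul_of_nonneg_left h2 (by positivity)
          _ = R := by rw [hRdef]; field_simp
      have hf0 : f 0 = 0 := by simp [hf]
      rwa [hf0] at this
  -- pigeonhole
  have hchoice : ∀ i : Fin k, ∃ y : t, f i ∈ Metric.ball (y:EuclideanSpace ℝ (Fin n)) (1/2) := by
    intro i
    have := hcov (hmemB i)
    rw [Set.mem_iUnion₂] at this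
    obtain ⟨y, hy, hmem'⟩ := this
    exact ⟨⟨y, hy⟩, hmem'⟩
  choose g hg using hchoice
  obtain ⟨i, j, hij, hgij⟩ := Fintype.exists_ne_map_eq_of_card_lt g
    (by simp only [Fintype.card_fin, hk]; omega)
  have d1 : dist (f i) (f j) < 1 := by
    have h1 := hg i
    have h2 := hg j
    rw [Metric.mem_ball] at h1 h2
    rw [hgij] at h1
    calc dist (f i) (f j) ≤ dist (f i) (g j : EuclideanSpace ℝ (Fin n)) + dist (g j : EuclideanSpace ℝ (Fin n)) (f j) := dist_triangle _ _ _
      _ < 1/2 + 1/2 := by rw [dist_comm (g j : EuclideanSpace ℝ (Fin n)) (f j)]; linarith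
      _ = 1 := by norm_num
  exact absurd d1 (not_lt.mpr (hlow1 i j hij))

end
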